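/- Let $T$ be a perfectoid $C$-algebra. Then for every $x\in\mathcal{O}$, the $\mathcal{O}$-module $T^{\circ}/xT^{\circ}$ has no nonzero $\mathfrak{m}$-torsion, i.e. any element of $T^{\circ}/x$ killed by every element of the maximal ideal $\mathfrak{m}\subset\mathcal{O}$ is zero. -/
import Mathlib


/-- An element of a normed ring is *powerbounded* if the norms of its powers are uniformly
bounded. -/
def PowerBoundedElt (T : Type) [NormedRing T] (t : T) : Prop :=
  ∃ B : ℝ, ∀ n : ℕ, ‖t ^ n‖ ≤ B

/-!
STATEMENT 8 (No `𝔪`-torsion in `T^∘/x` for a perfectoid `C`-algebra `T`).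

Setup: `C` is a complete algebraically closed nonarchimedean extension of `ℚ_p`, rendered as
a complete algebraically closed normed field of characteristic `0` with ultrametric norm and
`0 < ‖p‖ < 1`; its ring of integers is `𝒪 = {x | ‖x‖ ≤ 1}` with maximal ideal
`𝔪 = {x | ‖x‖ < 1}`.  `T` is a perfectoid `C`-algebra: a complete normed (Banach)
`C`-algebra with ultrametric norm such that the set `T^∘` of powerbounded elements is
bounded and the Frobenius is surjective on `T^∘/p` (every powerbounded `t` can be written as
`s^p + p·u` with `s`, `u` powerbounded).

Conclusion: for every `x ∈ 𝒪`, the `𝒪`-module `T^∘/xT^∘` has no nonzero `𝔪`-torsion: if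
`t ∈ T^∘` satisfies `ε • t ∈ x • T^∘` for every `ε ∈ 𝔪`, then already `t ∈ x • T^∘`.
-/
theorem perfectoid_powerbounded_no_m_torsion
    (p : ℕ) (hp : p.Prime)
    (C : Type) [NormedField C] [CompleteSpace C] [IsAlgClosed C] [CharZero C]
    (hCua : ∀ x y : C, ‖x + y‖ ≤ max ‖x‖ ‖y‖)
    (hpC : ‖(p : C)‖ < 1) (hpC0 : (0 : ℝ) < ‖(p : C)‖)
    (T : Type) [NormedRing T] [NormedAlgebra C T] [CompleteSpace T]
    (hTua : ∀ x y : T, ‖x + y‖ ≤ max ‖x‖ ‖y‖)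
    -- `T^∘` is bounded
    (hbdd : ∃ B : ℝ, ∀ t : T, PowerBoundedElt T t → ‖t‖ ≤ B)
    -- Frobenius is surjective on `T^∘/p`
    (hfrob : ∀ t : T, PowerBoundedElt T t →
      ∃ s u : T, PowerBoundedElt T s ∧ PowerBoundedElt T u ∧ t = s ^ p + (p : T) * u)
    (x : C) (hx : ‖x‖ ≤ 1) :
    ∀ t : T, PowerBoundedElt T t →
      (∀ ε : C, ‖ε‖ < 1 → ∃ s : T, PowerBoundedElt T s ∧ ε • t = x • s) →
      ∃ s : T, PowerBoundedElt T s ∧ t = x • s := by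
  intro t ht hmt
  have hp0 : (p : C) ≠ 0 := by
    intro h; rw [h, norm_zero] at hpC0; exact lt_irrefl _ hpC0
  rcases eq_or_ne x 0 with hx0 | hx0
  · obtain ⟨s, hs, hst⟩ := hmt (p : C) hpC
    have ht0 : t = 0 := by
      have h1 : (p : C) • t = 0 := by rw [hst, hx0, zero_smul]
      have h2 := congrArg (fun y => ((p : C))⁻¹ • y) h1
      simpa [smul_smul, inv_mul_cancel₀ hp0] using h2
    refine ⟨0, ⟨max ‖(1 : T)‖ 0, fun n => ?_⟩, by simp [ht0]⟩
    cases n <;> simp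
  · obtain ⟨B, hB⟩ := hbdd
    set s : T := x⁻¹ • t with hsdef
    have hxs : x • s = t := by rw [hsdef, smul_smul, mul_inv_cancel₀ hx0, one_smul]
    refine ⟨s, ?_, hxs.symm⟩
    -- `ε • s` is powerbounded for every `ε` in the maximal ideal
    have key : ∀ ε : C, ‖ε‖ < 1 → PowerBoundedElt T (ε • s) := by
      intro ε hε
      obtain ⟨u, hu, htu⟩ := hmt ε hε
      have heq : ε • s = u := by
        have h1 : x • (ε • s) = x • u := by
          rw [smul_smul, mul_comm, ← smul_smul, hxs, htu]
        have h2 := congrArg (fun y => x⁻¹ • y) h1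
        simpa [smul_smul, ← mul_assoc, inv_mul_cancel₀ hx0] using h2
      rw [heq]; exact hu
    refine ⟨max (B / ‖(p : C)‖) ‖(1 : T)‖, fun n => ?_⟩
    cases n with
    | zero => simp
    | succ m =>
      set k := m + 1 with hk
      obtain ⟨z, hz⟩ := IsAlgClosed.exists_pow_nat_eq (p : C) (Nat.succ_pos m)
      have hznorm : ‖z‖ < 1 := by
        by_contra h
        push_neg at h
        have : (1 : ℝ) ≤ ‖z ^ k‖ := by
          rw [norm_pow]; exact one_le_pow₀ h
        rw [hz] at this; linarith
      obtain ⟨Bz, hBz⟩ := key z hznorm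
      have hpow : PowerBoundedElt T ((z • s) ^ k) :=
        ⟨Bz, fun j => by rw [← pow_mul]; exact hBz _⟩
      have hle : ‖(z • s) ^ k‖ ≤ B := hB _ hpow
      have hnorm : ‖(z • s) ^ k‖ = ‖(p : C)‖ * ‖s ^ k‖ := by
        rw [smul_pow, hz, norm_smul]
      rw [hnorm] at hle
      have : ‖s ^ k‖ ≤ B / ‖(p : C)‖ := by
        rw [le_div_iff₀ hpC0]; linarith [mul_comm ‖(p : C)‖ ‖s ^ k‖]
      exact le_trans this (le_max_left _ _)
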